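/- Let G be a 2d-regular graph. Every monotone dynamo for the majority process on G has at least (1 − d/(d+2))·|V(G)| = (2/(d+2))·|V(G)| active vertices. -/

import Mathlib

/-- One round of the majority process on a `2d`-regular graph: a vertex becomes active iff
it has at least `d + 1` active neighbors, or exactly `d` active neighbors and is currently
active (ties keep the current state). -/
def majStep {V : Type*} (G : SimpleGraph V) (d : ℕ) (A : Set V) : Set V :=
  {v | d + 1 ≤ (G.neighborSet v ∩ A).ncard ∨ ((G.neighborSet v ∩ A).ncard = d ∧ v ∈ A)}

/-- A dynamo for the majority process: from some time on, all vertices are active. -/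
def majDynamo {V : Type*} (G : SimpleGraph V) (d : ℕ) (A : Set V) : Prop :=
  ∃ t, ∀ t' ≥ t, (majStep G d)^[t'] A = Set.univ

/-- A monotone dynamo for the majority process. -/
def majMonotoneDynamo {V : Type*} (G : SimpleGraph V) (d : ℕ) (A : Set V) : Prop :=
  majDynamo G d A ∧ ∀ t, (majStep G d)^[t] A ⊆ (majStep G d)^[t + 1] A


open Finset

-- double counting / symmetry lemma
lemma sym_sum {V : Type*} [Fintype V] [DecidableEq V] (G : SimpleGraph V) [DecidableRel G.Adj]
    (S T : Finset V) :
    ∑ v ∈ S, (G.neighborFinset v ∩ T).card = ∑ u ∈ T, (G.neighborFinset u ∩ S).card := by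
  have h : ∀ (S T : Finset V) (v : V), (G.neighborFinset v ∩ T).card
      = ∑ u ∈ T, if G.Adj v u then 1 else 0 := by
    intro S T v
    rw [← Finset.card_filter]
    congr 1
    ext u
    simp [SimpleGraph.mem_neighborFinset, and_comm]
  simp only [h S T, h T S]
  rw [Finset.sum_comm]
  apply Finset.sum_congr rfl
  intro u _
  apply Finset.sum_congr rfl
  intro v _
  simp [G.adj_comm]

theorem stmt_4 {V : Type*} [Fintype V] (G : SimpleGraph V) (d : ℕ)
    (hreg : ∀ v, (G.neighborSet v).ncard = 2 * d)
    (A : Set V) (hA : majMonotoneDynamo G d A) :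
    2 * Fintype.card V ≤ (d + 2) * A.ncard := by
  classical
  obtain ⟨⟨T, hT⟩, hmono⟩ := hA
  set f := majStep G d with hf
  -- finset versions
  let S : ℕ → Finset V := fun t => (f^[t] A).toFinset
  have hScard : ∀ t, (S t).card = (f^[t] A).ncard := by
    intro t; simp [S, Set.ncard_eq_toFinset_card']
  -- neighbor cards
  have hN : ∀ (v : V) (B : Set V), (G.neighborSet v ∩ B).ncard
      = (G.neighborFinset v ∩ B.toFinset).card := by
    intro v B
    rw [Set.ncard_eq_toFinset_card']
    congr 1
    ext u
    simp [SimpleGraph.mem_neighborFinset]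
  have hdeg : ∀ v, (G.neighborFinset v).card = 2 * d := by
    intro v
    rw [← hreg v, Set.ncard_eq_toFinset_card']
    congr 1
  -- subset
  have hsub : ∀ t, S t ⊆ S (t + 1) := by
    intro t v hv
    simp only [S, Set.mem_toFinset] at *
    exact hmono t hv
  -- membership in next step
  have hstep : ∀ t v, v ∈ S (t + 1) ↔
      (d + 1 ≤ (G.neighborFinset v ∩ S t).card ∨
        ((G.neighborFinset v ∩ S t).card = d ∧ v ∈ S t)) := by
    intro t v
    simp only [S, Set.mem_toFinset, Function.iterate_succ_apply']
    rw [hf]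
    simp only [majStep, Set.mem_setOf_eq, hN v ((majStep G d)^[t] A)]
  -- the potential function
  let F : Finset V → ℕ := fun s => ∑ v ∈ sᶜ, (G.neighborFinset v ∩ s).card
  -- each vertex currently active has ≥ d active neighbors
  have hd_act : ∀ t v, v ∈ S t → d ≤ (G.neighborFinset v ∩ S t).card := by
    intro t v hv
    rcases (hstep t v).1 (hsub t hv) with h | h
    · omega
    · omega
  -- newly activated vertices have ≥ d+1 active neighbors
  have hd_new : ∀ t v, v ∈ S (t + 1) → v ∉ S t →
      d + 1 ≤ (G.neighborFinset v ∩ S t).card := by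
    intro t v hv hv'
    rcases (hstep t v).1 hv with h | h
    · exact h
    · exact absurd h.2 hv'
  -- decrease lemma
  have hdec : ∀ t, F (S (t + 1)) + 2 * (S (t + 1)).card ≤ F (S t) + 2 * (S t).card := by
    intro t
    set s := S t
    set s' := S (t + 1)
    have hss : s ⊆ s' := hsub t
    set B := s' \ s with hB
    have hcompl : sᶜ = s'ᶜ ∪ B := by
      ext v; simp only [mem_compl, mem_union, hB, mem_sdiff]
      constructor
      · intro h; by_cases h' : v ∈ s' <;> tauto
      · rintro (h | h)
        · intro hv; exact h (hss hv)
        · exact h.2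
    have hdisj : Disjoint s'ᶜ B := by
      rw [Finset.disjoint_left]
      intro v hv hv'
      simp only [mem_compl] at hv
      exact hv (mem_sdiff.1 hv' |>.1)
    have hcard' : s'.card = s.card + B.card := by
      rw [hB, card_sdiff_of_subset hss]
      have := card_le_card hss
      omega
    -- split F s
    have hFs : F s = ∑ v ∈ s'ᶜ, (G.neighborFinset v ∩ s).card
        + ∑ v ∈ B, (G.neighborFinset v ∩ s).card := by
      simp only [F]
      rw [hcompl, Finset.sum_union hdisj]
    -- split neighbor counts in s'
    have hNsplit : ∀ v : V, (G.neighborFinset v ∩ s').card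
        = (G.neighborFinset v ∩ s).card + (G.neighborFinset v ∩ B).card := by
      intro v
      rw [← card_union_of_disjoint]
      · congr 1
        ext u
        simp only [mem_union, mem_inter, hB, mem_sdiff]
        constructor
        · intro ⟨h1, h2⟩; by_cases h' : u ∈ s <;> tauto
        · rintro (⟨h1, h2⟩ | ⟨h1, h2, h3⟩)
          · exact ⟨h1, hss h2⟩
          · exact ⟨h1, h2⟩
      · rw [Finset.disjoint_left]
        intro u hu hu'
        exact (mem_sdiff.1 (mem_inter.1 hu').2).2 (mem_inter.1 hu).2
    have hFs' : F s' = ∑ v ∈ s'ᶜ, (G.neighborFinset v ∩ s).card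
        + ∑ u ∈ B, (G.neighborFinset u ∩ s'ᶜ).card := by
      have h0 : F s' = ∑ v ∈ s'ᶜ, ((G.neighborFinset v ∩ s).card
          + (G.neighborFinset v ∩ B).card) := by
        simp only [F]
        exact Finset.sum_congr rfl (fun v _ => hNsplit v)
      rw [h0, Finset.sum_add_distrib, sym_sum G s'ᶜ B]
    -- per-vertex bound on B
    have hperB : ∀ u ∈ B, (G.neighborFinset u ∩ s'ᶜ).card + 2
        ≤ (G.neighborFinset u ∩ s).card := by
      intro u hu
      obtain ⟨hu1, hu2⟩ := mem_sdiff.1 hu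
      have h1 : d + 1 ≤ (G.neighborFinset u ∩ s).card := hd_new t u hu1 hu2
      have h2 : (G.neighborFinset u ∩ s).card + (G.neighborFinset u ∩ s'ᶜ).card ≤ 2 * d := by
        rw [← card_union_of_disjoint]
        · refine le_trans (card_le_card ?_) (le_of_eq (hdeg u))
          intro x hx
          rcases mem_union.1 hx with h | h
          · exact (mem_inter.1 h).1
          · exact (mem_inter.1 h).1
        · rw [Finset.disjoint_left]
          intro x hx hx'
          exact (mem_compl.1 (mem_inter.1 hx').2) (hss (mem_inter.1 hx).2)
      omega
    have hsumB : ∑ u ∈ B, (G.neighborFinset u ∩ s'ᶜ).card + 2 * B.card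
        ≤ ∑ u ∈ B, (G.neighborFinset u ∩ s).card := by
      calc ∑ u ∈ B, (G.neighborFinset u ∩ s'ᶜ).card + 2 * B.card
          = ∑ u ∈ B, ((G.neighborFinset u ∩ s'ᶜ).card + 2) := by
            rw [Finset.sum_add_distrib, Finset.sum_const, smul_eq_mul]; ring
        _ ≤ ∑ u ∈ B, (G.neighborFinset u ∩ s).card := Finset.sum_le_sum hperB
    rw [hFs, hFs', hcard']
    omega
  -- telescoping
  have htel : ∀ t, F (S t) + 2 * (S t).card ≤ F (S 0) + 2 * (S 0).card := by
    intro t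
    induction t with
    | zero => exact le_refl _
    | succ n ih => exact le_trans (hdec n) ih
  -- initial bound : F (S 0) ≤ d * (S 0).card
  have hinit : F (S 0) ≤ d * (S 0).card := by
    simp only [F]
    rw [sym_sum]
    calc ∑ u ∈ S 0, (G.neighborFinset u ∩ (S 0)ᶜ).card
        ≤ ∑ u ∈ S 0, d := by
          apply Finset.sum_le_sum
          intro u hu
          have h1 : d ≤ (G.neighborFinset u ∩ S 0).card := hd_act 0 u hu
          have h2 : (G.neighborFinset u ∩ S 0).card + (G.neighborFinset u ∩ (S 0)ᶜ).card
              ≤ 2 * d := by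
            rw [← card_union_of_disjoint]
            · refine le_trans (card_le_card ?_) (le_of_eq (hdeg u))
              intro x hx
              rcases mem_union.1 hx with h | h
              · exact (mem_inter.1 h).1
              · exact (mem_inter.1 h).1
            · rw [Finset.disjoint_left]
              intro x hx hx'
              exact (mem_compl.1 (mem_inter.1 hx').2) (mem_inter.1 hx).2
          omega
      _ = d * (S 0).card := by rw [Finset.sum_const, smul_eq_mul]; ring
  -- final step
  have hfin : S T = Finset.univ := by
    simp only [S]
    rw [hT T le_rfl]
    simp
  have hFfin : F (S T) = 0 := by
    simp only [F, hfin, compl_univ, Finset.sum_empty]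
  have hA0 : (S 0).card = A.ncard := by
    simp [S, Set.ncard_eq_toFinset_card']
    congr 1; ext x; exact (Set.mem_toFinset (s := A)).trans (by simp)
  calc 2 * Fintype.card V = F (S T) + 2 * (S T).card := by
        rw [hFfin, hfin, Finset.card_univ]; ring
    _ ≤ F (S 0) + 2 * (S 0).card := htel T
    _ ≤ d * (S 0).card + 2 * (S 0).card := by omega
    _ = (d + 2) * (S 0).card := by ring
    _ = (d + 2) * A.ncard := by rw [hA0]
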